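/- Let S be a processor symmetric and location symmetric memory system, let Ω be a simple witness, and let τ be an unambiguous trace of S(n,m,v). If the constraint graph G(Ω)(τ) has a k-nice cycle, then there is an unambiguous trace τ'' of S(n,m,v) such that G(Ω)(τ'') has a canonical k-nice cycle. -/

import Mathlib

/-- A memory operation: read or write. -/
inductive MemOp : Type
  | R : MemOp
  | W : MemOp
deriving DecidableEq

/-- A memory event ⟨op, proc, loc, data⟩. -/
structure MemEvent : Type where
  op : MemOp
  proc : ℕ
  loc : ℕ
  data : ℕ
deriving DecidableEq

instance : Inhabited MemEvent := ⟨⟨MemOp.R, 1, 1, 0⟩⟩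

/-- A trace is a finite sequence of memory events (1-indexed via `ev`). -/
abbrev MTrace := List MemEvent

/-- The x-th event of a trace (1-indexed). -/
def ev (τ : MTrace) (x : ℕ) : MemEvent := τ.getD (x - 1) default

/-- dom(τ) = {1, …, |τ|}. -/
def Dom (τ : MTrace) : Set ℕ := {x | 1 ≤ x ∧ x ≤ τ.length}

/-- P(τ,i): indices of events of processor i. -/
def Pset (τ : MTrace) (i : ℕ) : Set ℕ := {x | x ∈ Dom τ ∧ (ev τ x).proc = i}

/-- L(τ,j): indices of events to location j. -/
def Lset (τ : MTrace) (j : ℕ) : Set ℕ := {x | x ∈ Dom τ ∧ (ev τ x).loc = j}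

/-- L^w(τ,j): indices of write events to location j. -/
def Lw (τ : MTrace) (j : ℕ) : Set ℕ := {x | x ∈ Lset τ j ∧ (ev τ x).op = MemOp.W}

/-- L^r(τ,j): indices of read events to location j. -/
def Lr (τ : MTrace) (j : ℕ) : Set ℕ := {x | x ∈ Lset τ j ∧ (ev τ x).op = MemOp.R}

/-- A trace is unambiguous if every write event has a nonzero data value distinct
from that of every other write event to the same location. -/
def Unambiguous (τ : MTrace) : Prop :=
  ∀ j, ∀ x ∈ Lw τ j, (ev τ x).data ≠ 0 ∧
    ∀ y ∈ Lw τ j, y ≠ x → (ev τ y).data ≠ (ev τ x).data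

/-- A trace is causal if the data value of every read event is 0 or equals the data
value of some write event to the same location. -/
def Causal (τ : MTrace) : Prop :=
  ∀ j, ∀ x ∈ Lr τ j, (ev τ x).data = 0 ∨ ∃ y ∈ Lw τ j, (ev τ y).data = (ev τ x).data

/-- ⟨x,y⟩ ∈ M(τ,i): the total order on P(τ,i) given by index order. -/
def Mrel (τ : MTrace) (i : ℕ) (x y : ℕ) : Prop :=
  x ∈ Pset τ i ∧ y ∈ Pset τ i ∧ x < y

/-- A sequence of memory events (given by its length and 1-indexed access function)
is serial: each event's data value equals that of the latest write to the same
location at an index no larger than its own, and equals 0 if no such write exists. -/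
def SerialFn (len : ℕ) (e : ℕ → MemEvent) : Prop :=
  ∀ u, 1 ≤ u → u ≤ len →
    ((∀ k, 1 ≤ k → k ≤ u → ¬((e k).op = MemOp.W ∧ (e k).loc = (e u).loc)) →
       (e u).data = 0) ∧
    (∀ k, 1 ≤ k → k ≤ u → (e k).op = MemOp.W → (e k).loc = (e u).loc →
       (∀ k', k < k' → k' ≤ u → ¬((e k').op = MemOp.W ∧ (e k').loc = (e u).loc)) →
       (e u).data = (e k).data)

/-- f (with inverse g) is a permutation of {1,…,|τ|} satisfying conditions C1 and C2. -/
def IsSCWitness (τ : MTrace) (f g : ℕ → ℕ) : Prop :=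
  (∀ u ∈ Dom τ, f u ∈ Dom τ) ∧
  (∀ u ∈ Dom τ, g u ∈ Dom τ) ∧
  (∀ u ∈ Dom τ, g (f u) = u) ∧
  (∀ u ∈ Dom τ, f (g u) = u) ∧
  (∀ i u v, Mrel τ i u v → f u < f v) ∧
  SerialFn τ.length (fun x => ev τ (g x))

/-- A trace is sequentially consistent if some permutation satisfies C1 and C2. -/
def SeqConsistent (τ : MTrace) : Prop := ∃ f g, IsSCWitness τ f g

/-- A witness assigns to each trace and location a strict total order on L^w(τ,j). -/
def IsWitness (Ω : MTrace → ℕ → ℕ → ℕ → Prop) : Prop :=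
  ∀ τ j,
    (∀ x y, Ω τ j x y → x ∈ Lw τ j ∧ y ∈ Lw τ j) ∧
    (∀ x, ¬ Ω τ j x x) ∧
    (∀ x y z, Ω τ j x y → Ω τ j y z → Ω τ j x z) ∧
    (∀ x y, x ∈ Lw τ j → y ∈ Lw τ j → x ≠ y → Ω τ j x y ∨ Ω τ j y x)

/-- A witness is simple if it orders the writes to each location by index order. -/
def IsSimple (Ω : MTrace → ℕ → ℕ → ℕ → Prop) : Prop :=
  ∀ τ j x y, Ω τ j x y ↔ (x ∈ Lw τ j ∧ y ∈ Lw τ j ∧ x < y)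

/-- ⟨x,y⟩ ∈ Ω^e(τ,j): the extension of the witness order to all events to location j. -/
def OmegaE (Ω : MTrace → ℕ → ℕ → ℕ → Prop) (τ : MTrace) (j x y : ℕ) : Prop :=
  x ∈ Lset τ j ∧ y ∈ Lset τ j ∧
  (((ev τ x).data = (ev τ y).data ∧ (ev τ x).op = MemOp.W ∧ (ev τ y).op = MemOp.R) ∨
   ((ev τ x).data = 0 ∧ (ev τ y).data ≠ 0) ∨
   (∃ a b, a ∈ Lw τ j ∧ b ∈ Lw τ j ∧ Ω τ j a b ∧
      (ev τ a).data = (ev τ x).data ∧ (ev τ b).data = (ev τ y).data))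

/-- Edge of the constraint graph G(Ω)(τ): union of the M(τ,i) and the Ω^e(τ,j). -/
def GEdge (Ω : MTrace → ℕ → ℕ → ℕ → Prop) (τ : MTrace) (x y : ℕ) : Prop :=
  (∃ i, Mrel τ i x y) ∨ (∃ j, OmegaE Ω τ j x y)

/-- The constraint graph G(Ω)(τ) has a cycle. -/
def HasCycle (Ω : MTrace → ℕ → ℕ → ℕ → Prop) (τ : MTrace) : Prop :=
  ∃ x, Relation.TransGen (GEdge Ω τ) x x

/-- The constraint graph G(Ω)(τ) is acyclic. -/
def Acyclic (Ω : MTrace → ℕ → ℕ → ℕ → Prop) (τ : MTrace) : Prop :=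
  ¬ HasCycle Ω τ

/-- All events of the trace have processor in {1,…,n} and location in {1,…,m}. -/
def InRange (n m : ℕ) (τ : MTrace) : Prop :=
  ∀ e ∈ τ, 1 ≤ e.proc ∧ e.proc ≤ n ∧ 1 ≤ e.loc ∧ e.loc ≤ m

/-- All data values in the trace lie in {0,…,v}. -/
def DataBounded (v : ℕ) (τ : MTrace) : Prop := ∀ e ∈ τ, e.data ≤ v

/-- A memory system with n processors and m locations: for each v ≥ 1, a set S(n,m,v)
of traces whose processors, locations, and data values are in range. -/
structure MemSystem (n m : ℕ) : Type where
  S : ℕ → Set MTrace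
  wf : ∀ v, 1 ≤ v → ∀ τ ∈ S v, InRange n m τ ∧ DataBounded v τ

/-- S(n,m): the union of the S(n,m,v) over v ≥ 1. -/
def MemSystem.traces {n m : ℕ} (M : MemSystem n m) : Set MTrace :=
  {τ | ∃ v, 1 ≤ v ∧ τ ∈ M.S v}

/-- A renaming function λ with λ(j,0) = 0 for every location j. -/
def IsRenaming (lam : ℕ → ℕ → ℕ) : Prop := ∀ j, lam j 0 = 0

/-- λ^d: rename the data value of each event according to its location. -/
def renameD (lam : ℕ → ℕ → ℕ) (τ : MTrace) : MTrace :=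
  τ.map fun e => { e with data := lam e.loc e.data }

/-- The memory system is data independent: a trace is in S(n,m,v) iff it is obtained
from an unambiguous trace of S(n,m) by a renaming function with values in {0,…,v}. -/
def DataIndependent {n m : ℕ} (M : MemSystem n m) : Prop :=
  ∀ v, 1 ≤ v → ∀ τ, τ ∈ M.S v ↔
    ∃ τ' lam, τ' ∈ M.traces ∧ Unambiguous τ' ∧ IsRenaming lam ∧
      (∀ j d, lam j d ≤ v) ∧ τ = renameD lam τ'

/-- λ^p: rename the processor of each event. -/
def renameP (lam : ℕ → ℕ) (τ : MTrace) : MTrace :=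
  τ.map fun e => { e with proc := lam e.proc }

/-- λ^l: rename the location of each event. -/
def renameL (lam : ℕ → ℕ) (τ : MTrace) : MTrace :=
  τ.map fun e => { e with loc := lam e.loc }

/-- λ is a permutation of {1,…,n}. -/
def PermOn (n : ℕ) (lam : ℕ → ℕ) : Prop :=
  Set.BijOn lam (Set.Icc 1 n) (Set.Icc 1 n)

/-- The memory system is processor symmetric. -/
def ProcSymmetric {n m : ℕ} (M : MemSystem n m) : Prop :=
  ∀ lam, PermOn n lam → ∀ v τ, τ ∈ M.S v → renameP lam τ ∈ M.S v

/-- The memory system is location symmetric. -/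
def LocSymmetric {n m : ℕ} (M : MemSystem n m) : Prop :=
  ∀ lam, PermOn m lam → ∀ v τ, τ ∈ M.S v → renameL lam τ ∈ M.S v

/-- x ⊕ 1 in the cyclic group {1,…,k} with identity k. -/
def cyc (k x : ℕ) : ℕ := if x = k then 1 else x + 1

/-- A k-nice cycle u_1,v_1,…,u_k,v_k in G(Ω)(τ): distinct vertices; each ⟨u_x,v_x⟩
is a processor edge, each ⟨v_x,u_{x⊕1}⟩ a location edge; no processor (resp.
location) contributes two edges. -/
def NiceCycle (Ω : MTrace → ℕ → ℕ → ℕ → Prop) (τ : MTrace) (k : ℕ)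
    (u v : ℕ → ℕ) : Prop :=
  1 ≤ k ∧
  (∀ x ∈ Set.Icc 1 k, ∀ y ∈ Set.Icc 1 k, x ≠ y → u x ≠ u y) ∧
  (∀ x ∈ Set.Icc 1 k, ∀ y ∈ Set.Icc 1 k, x ≠ y → v x ≠ v y) ∧
  (∀ x ∈ Set.Icc 1 k, ∀ y ∈ Set.Icc 1 k, u x ≠ v y) ∧
  (∀ x ∈ Set.Icc 1 k, ∃ i, Mrel τ i (u x) (v x)) ∧
  (∀ x ∈ Set.Icc 1 k, ∃ j, OmegaE Ω τ j (v x) (u (cyc k x))) ∧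
  (∀ x ∈ Set.Icc 1 k, ∀ y ∈ Set.Icc 1 k, x ≠ y → ∀ i,
     Mrel τ i (u x) (v x) → ¬ Mrel τ i (u y) (v y)) ∧
  (∀ x ∈ Set.Icc 1 k, ∀ y ∈ Set.Icc 1 k, x ≠ y → ∀ j,
     OmegaE Ω τ j (v x) (u (cyc k x)) → ¬ OmegaE Ω τ j (v y) (u (cyc k y)))

/-- A canonical k-nice cycle: a k-nice cycle whose processor edges are in M(τ,x) and
whose location edges are in Ω^e(τ,x⊕1), for x = 1,…,k. -/
def CanonicalNiceCycle (Ω : MTrace → ℕ → ℕ → ℕ → Prop) (τ : MTrace) (k : ℕ)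
    (u v : ℕ → ℕ) : Prop :=
  NiceCycle Ω τ k u v ∧
  (∀ x ∈ Set.Icc 1 k, Mrel τ x (u x) (v x)) ∧
  (∀ x ∈ Set.Icc 1 k, OmegaE Ω τ (cyc k x) (v x) (u (cyc k x)))

/-- The trace satisfies the automaton Constrain_k(j). -/
def ConstrainK (k j : ℕ) (τ : MTrace) : Prop :=
  (j ≤ k →
    (∀ x ∈ Lw τ j, (ev τ x).data ≤ 2) ∧
    (∀ x ∈ Lw τ j, ∀ y ∈ Lw τ j, (ev τ x).data = 1 → (ev τ y).data = 1 → x = y) ∧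
    (∀ x ∈ Lw τ j, ∀ y ∈ Lw τ j, (ev τ x).data = 0 → (ev τ y).data ≠ 0 → x < y) ∧
    (∀ y ∈ Lw τ j, (ev τ y).data = 2 → ∃ x ∈ Lw τ j, (ev τ x).data = 1 ∧ x < y)) ∧
  (k < j → ∀ x ∈ Lw τ j, (ev τ x).data = 0)

/-- The trace satisfies the automaton Check_k(i). -/
def CheckK (k i : ℕ) (τ : MTrace) : Prop :=
  ∃ x ∈ Dom τ, ∃ y ∈ Dom τ, x < y ∧
    (ev τ x).proc = i ∧ (ev τ x).loc = i ∧
    ((ev τ x).data = 1 ∨ (ev τ x).data = 2) ∧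
    (ev τ y).proc = i ∧ (ev τ y).loc = cyc k i ∧
    ((ev τ y).data = 0 ∨ ((ev τ y).op = MemOp.W ∧ (ev τ y).data = 1))


lemma exists_perm_fix (n : ℕ) (k : ℕ) (hkn : k ≤ n) (i : ℕ → ℕ)
    (hrange : ∀ x, 1 ≤ x → x ≤ k → i x ∈ Set.Icc 1 n)
    (hinj : ∀ x, 1 ≤ x → x ≤ k → ∀ y, 1 ≤ y → y ≤ k → x ≠ y → i x ≠ i y) :
    ∃ σ : Equiv.Perm ℕ, (∀ x, 1 ≤ x → x ≤ k → σ (i x) = x) ∧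
      (∀ p, p ∉ Set.Icc 1 n → σ p = p) ∧ (∀ p ∈ Set.Icc 1 n, σ p ∈ Set.Icc 1 n) := by
  induction k with
  | zero =>
    exact ⟨Equiv.refl ℕ, fun x h1 h2 => by omega, fun p _ => rfl, fun p hp => hp⟩
  | succ K ih =>
    obtain ⟨σ', h1, h2, h3⟩ := ih (by omega)
      (fun x hx1 hx2 => hrange x hx1 (by omega))
      (fun x hx1 hx2 y hy1 hy2 => hinj x hx1 (by omega) y hy1 (by omega))
    set a := σ' (i (K + 1)) with ha
    have haIcc : a ∈ Set.Icc 1 n := h3 _ (hrange (K + 1) (by omega) le_rfl)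
    have hK1Icc : (K + 1) ∈ Set.Icc 1 n := Set.mem_Icc.mpr ⟨by omega, hkn⟩
    refine ⟨σ'.trans (Equiv.swap a (K + 1)), ?_, ?_, ?_⟩
    · intro x hx1 hx2
      simp only [Equiv.trans_apply]
      rcases Nat.lt_or_ge x (K + 1) with hlt | hge
      · have hx : σ' (i x) = x := h1 x hx1 (by omega)
        rw [hx]
        have hxa : x ≠ a := by
          intro hc
          have : σ' (i x) = σ' (i (K + 1)) := by rw [hx, ← ha, hc]
          have := σ'.injective this
          exact hinj x hx1 (by omega) (K + 1) (by omega) le_rfl (by omega) this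
        exact Equiv.swap_apply_of_ne_of_ne hxa (by omega)
      · have hx : x = K + 1 := by omega
        rw [hx, ← ha, Equiv.swap_apply_left]
    · intro p hp
      simp only [Equiv.trans_apply, h2 p hp]
      refine Equiv.swap_apply_of_ne_of_ne ?_ ?_
      · intro hc; rw [hc] at hp; exact hp haIcc
      · intro hc; rw [hc] at hp; exact hp hK1Icc
    · intro p hp
      simp only [Equiv.trans_apply]
      have := h3 p hp
      rcases eq_or_ne (σ' p) a with h | h
      · rw [h, Equiv.swap_apply_left]; exact hK1Icc
      rcases eq_or_ne (σ' p) (K + 1) with h' | h'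
      · rw [h', Equiv.swap_apply_right]; exact haIcc
      · rw [Equiv.swap_apply_of_ne_of_ne h h']; exact this

lemma bijOn_of_fix (σ : Equiv.Perm ℕ) (S : Set ℕ)
    (hfix : ∀ p, p ∉ S → σ p = p) (hmaps : ∀ p ∈ S, σ p ∈ S) :
    Set.BijOn σ S S := by
  refine ⟨hmaps, σ.injective.injOn, fun q hq => ?_⟩
  refine ⟨σ.symm q, ?_, σ.apply_symm_apply q⟩
  by_contra h
  have := hfix _ h
  rw [σ.apply_symm_apply] at this
  rw [← this] at h
  exact h hq

/-- Event transform by processor/location permutations. -/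
def trE (σp σl : Equiv.Perm ℕ) (e : MemEvent) : MemEvent :=
  ⟨e.op, σp e.proc, σl e.loc, e.data⟩

lemma rename_eq_map (σp σl : Equiv.Perm ℕ) (τ : MTrace) :
    renameL (⇑σl) (renameP (⇑σp) τ) = τ.map (trE σp σl) := by
  unfold renameL renameP trE
  rw [List.map_map]
  rfl

lemma dom_tr (σp σl : Equiv.Perm ℕ) (τ : MTrace) :
    Dom (τ.map (trE σp σl)) = Dom τ := by
  unfold Dom; rw [List.length_map]

lemma ev_tr (σp σl : Equiv.Perm ℕ) (τ : MTrace) {x : ℕ} (hx : x ∈ Dom τ) :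
    ev (τ.map (trE σp σl)) x = trE σp σl (ev τ x) := by
  obtain ⟨h1, h2⟩ := hx
  have hlt : x - 1 < τ.length := by omega
  have hlt' : x - 1 < (τ.map (trE σp σl)).length := by rw [List.length_map]; omega
  unfold ev
  rw [List.getD_eq_getElem _ _ hlt', List.getD_eq_getElem _ _ hlt, List.getElem_map]

lemma lw_mem_dom {τ : MTrace} {j x : ℕ} (h : x ∈ Lw τ j) : x ∈ Dom τ := h.1.1

lemma pset_tr (σp σl : Equiv.Perm ℕ) (τ : MTrace) (i : ℕ) :
    Pset (τ.map (trE σp σl)) (σp i) = Pset τ i := by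
  unfold Pset
  ext x
  simp only [Set.mem_setOf_eq, dom_tr]
  constructor
  · rintro ⟨hd, hp⟩
    rw [ev_tr σp σl τ hd] at hp
    exact ⟨hd, σp.injective hp⟩
  · rintro ⟨hd, hp⟩
    rw [ev_tr σp σl τ hd]
    exact ⟨hd, congrArg σp hp⟩

lemma mrel_tr (σp σl : Equiv.Perm ℕ) (τ : MTrace) (i a b : ℕ) :
    Mrel (τ.map (trE σp σl)) (σp i) a b ↔ Mrel τ i a b := by
  unfold Mrel; rw [pset_tr]

lemma lset_tr (σp σl : Equiv.Perm ℕ) (τ : MTrace) (j : ℕ) :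
    Lset (τ.map (trE σp σl)) (σl j) = Lset τ j := by
  unfold Lset
  ext x
  simp only [Set.mem_setOf_eq, dom_tr]
  constructor
  · rintro ⟨hd, hp⟩
    rw [ev_tr σp σl τ hd] at hp
    exact ⟨hd, σl.injective hp⟩
  · rintro ⟨hd, hp⟩
    rw [ev_tr σp σl τ hd]
    exact ⟨hd, congrArg σl hp⟩

lemma lw_tr (σp σl : Equiv.Perm ℕ) (τ : MTrace) (j : ℕ) :
    Lw (τ.map (trE σp σl)) (σl j) = Lw τ j := by
  unfold Lw
  ext x
  simp only [Set.mem_setOf_eq, lset_tr]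
  constructor
  · rintro ⟨hl, ho⟩
    rw [ev_tr σp σl τ hl.1] at ho
    exact ⟨hl, ho⟩
  · rintro ⟨hl, ho⟩
    rw [ev_tr σp σl τ hl.1]
    exact ⟨hl, ho⟩

lemma data_tr (σp σl : Equiv.Perm ℕ) (τ : MTrace) {x : ℕ} (hx : x ∈ Dom τ) :
    (ev (τ.map (trE σp σl)) x).data = (ev τ x).data := by
  rw [ev_tr σp σl τ hx]; rfl

lemma op_tr (σp σl : Equiv.Perm ℕ) (τ : MTrace) {x : ℕ} (hx : x ∈ Dom τ) :
    (ev (τ.map (trE σp σl)) x).op = (ev τ x).op := by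
  rw [ev_tr σp σl τ hx]; rfl

lemma omega_tr (σp σl : Equiv.Perm ℕ) (τ : MTrace)
    (Ω : MTrace → ℕ → ℕ → ℕ → Prop) (hS : IsSimple Ω) (j a b : ℕ) :
    OmegaE Ω (τ.map (trE σp σl)) (σl j) a b ↔ OmegaE Ω τ j a b := by
  have hΩeq : ∀ a' b', Ω (τ.map (trE σp σl)) (σl j) a' b' ↔ Ω τ j a' b' := by
    intro a' b'; rw [hS, hS, lw_tr]
  unfold OmegaE
  constructor
  · rintro ⟨ha, hb, hcase⟩
    rw [lset_tr] at ha hb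
    have hda := data_tr σp σl τ ha.1
    have hdb := data_tr σp σl τ hb.1
    have hoa := op_tr σp σl τ ha.1
    have hob := op_tr σp σl τ hb.1
    refine ⟨ha, hb, ?_⟩
    rcases hcase with ⟨h1, h2, h3⟩ | ⟨h1, h2⟩ | ⟨a', b', ha', hb', hab, h1, h2⟩
    · exact Or.inl ⟨by rw [← hda, ← hdb]; exact h1, by rw [← hoa]; exact h2,
        by rw [← hob]; exact h3⟩
    · exact Or.inr (Or.inl ⟨by rw [← hda]; exact h1, by rw [← hdb]; exact h2⟩)
    · rw [lw_tr] at ha' hb'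
      rw [hΩeq] at hab
      have hda' := data_tr σp σl τ (lw_mem_dom ha')
      have hdb' := data_tr σp σl τ (lw_mem_dom hb')
      exact Or.inr (Or.inr ⟨a', b', ha', hb', hab,
        by rw [← hda', ← hda]; exact h1, by rw [← hdb', ← hdb]; exact h2⟩)
  · rintro ⟨ha, hb, hcase⟩
    have hda := data_tr σp σl τ ha.1
    have hdb := data_tr σp σl τ hb.1
    have hoa := op_tr σp σl τ ha.1
    have hob := op_tr σp σl τ hb.1
    refine ⟨by rw [lset_tr]; exact ha, by rw [lset_tr]; exact hb, ?_⟩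
    rcases hcase with ⟨h1, h2, h3⟩ | ⟨h1, h2⟩ | ⟨a', b', ha', hb', hab, h1, h2⟩
    · exact Or.inl ⟨by rw [hda, hdb]; exact h1, by rw [hoa]; exact h2,
        by rw [hob]; exact h3⟩
    · exact Or.inr (Or.inl ⟨by rw [hda]; exact h1, by rw [hdb]; exact h2⟩)
    · have hda' := data_tr σp σl τ (lw_mem_dom ha')
      have hdb' := data_tr σp σl τ (lw_mem_dom hb')
      refine Or.inr (Or.inr ⟨a', b', by rw [lw_tr]; exact ha', by rw [lw_tr]; exact hb',
        (hΩeq a' b').mpr hab, by rw [hda', hda]; exact h1, by rw [hdb', hdb]; exact h2⟩)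

lemma lw_tr' (σp σl : Equiv.Perm ℕ) (τ : MTrace) (j : ℕ) :
    Lw (τ.map (trE σp σl)) j = Lw τ (σl.symm j) := by
  conv_lhs => rw [← σl.apply_symm_apply j]
  exact lw_tr σp σl τ (σl.symm j)

lemma unamb_tr (σp σl : Equiv.Perm ℕ) (τ : MTrace) (hU : Unambiguous τ) :
    Unambiguous (τ.map (trE σp σl)) := by
  intro j x hx
  rw [lw_tr'] at hx
  obtain ⟨h1, h2⟩ := hU (σl.symm j) x hx
  constructor
  · rw [data_tr σp σl τ (lw_mem_dom hx)]; exact h1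
  · intro y hy hyx
    rw [lw_tr'] at hy
    rw [data_tr σp σl τ (lw_mem_dom hx), data_tr σp σl τ (lw_mem_dom hy)]
    exact h2 y hy hyx

/-- Inverse of x ⊕ 1 on {1,…,k}. -/
def cycInv (k x : ℕ) : ℕ := if x = 1 then k else x - 1

lemma cyc_mem {k x : ℕ} (hk : 1 ≤ k) (h1 : 1 ≤ x) (h2 : x ≤ k) :
    1 ≤ cyc k x ∧ cyc k x ≤ k := by unfold cyc; split <;> omega

lemma cycInv_mem {k x : ℕ} (hk : 1 ≤ k) (h1 : 1 ≤ x) (h2 : x ≤ k) :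
    1 ≤ cycInv k x ∧ cycInv k x ≤ k := by unfold cycInv; split <;> omega

lemma cycInv_cyc {k x : ℕ} (h1 : 1 ≤ x) (h2 : x ≤ k) : cycInv k (cyc k x) = x := by
  unfold cyc cycInv; split <;> split <;> omega

lemma cyc_cycInv {k x : ℕ} (h1 : 1 ≤ x) (h2 : x ≤ k) : cyc k (cycInv k x) = x := by
  unfold cyc cycInv; split <;> split <;> omega

lemma cyc_inj {k x y : ℕ} (hx1 : 1 ≤ x) (hx2 : x ≤ k) (hy1 : 1 ≤ y) (hy2 : y ≤ k)
    (h : cyc k x = cyc k y) : x = y := by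
  have e1 := cycInv_cyc hx1 hx2
  rw [h] at e1
  have e2 := cycInv_cyc hy1 hy2
  omega

lemma ev_mem {τ : MTrace} {x : ℕ} (hx : x ∈ Dom τ) : ev τ x ∈ τ := by
  obtain ⟨h1, h2⟩ := hx
  have hlt : x - 1 < τ.length := by omega
  unfold ev
  rw [List.getD_eq_getElem _ _ hlt]
  exact List.getElem_mem hlt

/-- For a processor and location symmetric memory system, a simple
witness Ω, and an unambiguous trace τ of S(n,m,v): if G(Ω)(τ) has a k-nice cycle,
then some unambiguous trace τ'' of S(n,m,v) has a canonical k-nice cycle. -/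
theorem nice_cycle_implies_canonical
    (n m v k : ℕ) (hn : 1 ≤ n) (hm : 1 ≤ m) (hv : 1 ≤ v)
    (M : MemSystem n m) (hP : ProcSymmetric M) (hL : LocSymmetric M)
    (Ω : MTrace → ℕ → ℕ → ℕ → Prop) (hΩ : IsWitness Ω) (hS : IsSimple Ω)
    (τ : MTrace) (hτ : τ ∈ M.S v) (hU : Unambiguous τ)
    (u w : ℕ → ℕ) (hcyc : NiceCycle Ω τ k u w) :
    ∃ τ'', τ'' ∈ M.S v ∧ Unambiguous τ'' ∧
      ∃ u'' w'', CanonicalNiceCycle Ω τ'' k u'' w'' := by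
  obtain ⟨hk1, hud, hwd, huw, hMex, hOex, hMuniq, hOuniq⟩ := hcyc
  have hIR := (M.wf v hv τ hτ).1
  have hM : ∀ x ∈ Set.Icc 1 k, Mrel τ ((ev τ (u x)).proc) (u x) (w x) := by
    intro x hx
    obtain ⟨i', hi'⟩ := hMex x hx
    have hp : (ev τ (u x)).proc = i' := hi'.1.2
    rw [hp]; exact hi'
  have hO : ∀ x ∈ Set.Icc 1 k, OmegaE Ω τ ((ev τ (w x)).loc) (w x) (u (cyc k x)) := by
    intro x hx
    obtain ⟨j', hj'⟩ := hOex x hx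
    have hp : (ev τ (w x)).loc = j' := hj'.1.2
    rw [hp]; exact hj'
  have hudom : ∀ x ∈ Set.Icc 1 k, u x ∈ Dom τ := fun x hx => (hM x hx).1.1
  have hwdom : ∀ x ∈ Set.Icc 1 k, w x ∈ Dom τ := fun x hx => (hM x hx).2.1.1
  have hirange : ∀ x, 1 ≤ x → x ≤ k → (ev τ (u x)).proc ∈ Set.Icc 1 n := by
    intro x h1 h2
    have h := hIR _ (ev_mem (hudom x (Set.mem_Icc.mpr ⟨h1, h2⟩)))
    exact Set.mem_Icc.mpr ⟨h.1, h.2.1⟩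
  have hjrange : ∀ x, 1 ≤ x → x ≤ k → (ev τ (w x)).loc ∈ Set.Icc 1 m := by
    intro x h1 h2
    have h := hIR _ (ev_mem (hwdom x (Set.mem_Icc.mpr ⟨h1, h2⟩)))
    exact Set.mem_Icc.mpr ⟨h.2.2.1, h.2.2.2⟩
  have hiinj : ∀ x, 1 ≤ x → x ≤ k → ∀ y, 1 ≤ y → y ≤ k → x ≠ y →
      (ev τ (u x)).proc ≠ (ev τ (u y)).proc := by
    intro x hx1 hx2 y hy1 hy2 hxy hc
    have hmx := hM x (Set.mem_Icc.mpr ⟨hx1, hx2⟩)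
    have hmy := hM y (Set.mem_Icc.mpr ⟨hy1, hy2⟩)
    rw [← hc] at hmy
    exact hMuniq x (Set.mem_Icc.mpr ⟨hx1, hx2⟩) y (Set.mem_Icc.mpr ⟨hy1, hy2⟩) hxy _ hmx hmy
  have hjinj : ∀ x, 1 ≤ x → x ≤ k → ∀ y, 1 ≤ y → y ≤ k → x ≠ y →
      (ev τ (w x)).loc ≠ (ev τ (w y)).loc := by
    intro x hx1 hx2 y hy1 hy2 hxy hc
    have hox := hO x (Set.mem_Icc.mpr ⟨hx1, hx2⟩)
    have hoy := hO y (Set.mem_Icc.mpr ⟨hy1, hy2⟩)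
    rw [← hc] at hoy
    exact hOuniq x (Set.mem_Icc.mpr ⟨hx1, hx2⟩) y (Set.mem_Icc.mpr ⟨hy1, hy2⟩) hxy _ hox hoy
  have hkn : k ≤ n := by
    have h := Finset.card_le_card_of_injOn (s := Finset.Icc 1 k) (t := Finset.Icc 1 n)
      (fun x => (ev τ (u x)).proc)
      (fun x hx => by
        rw [Finset.coe_Icc, Set.mem_Icc] at hx ⊢
        exact Set.mem_Icc.mp (hirange x hx.1 hx.2))
      (fun x hx y hy hxy => by
        rw [Finset.coe_Icc, Set.mem_Icc] at hx hy
        by_contra hne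
        exact hiinj x hx.1 hx.2 y hy.1 hy.2 hne hxy)
    simpa using h
  have hkm : k ≤ m := by
    have h := Finset.card_le_card_of_injOn (s := Finset.Icc 1 k) (t := Finset.Icc 1 m)
      (fun x => (ev τ (w x)).loc)
      (fun x hx => by
        rw [Finset.coe_Icc, Set.mem_Icc] at hx ⊢
        exact Set.mem_Icc.mp (hjrange x hx.1 hx.2))
      (fun x hx y hy hxy => by
        rw [Finset.coe_Icc, Set.mem_Icc] at hx hy
        by_contra hne
        exact hjinj x hx.1 hx.2 y hy.1 hy.2 hne hxy)
    simpa using h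
  obtain ⟨σp, hσp1, hσp2, hσp3⟩ := exists_perm_fix n k hkn _ hirange hiinj
  have hjrange' : ∀ x, 1 ≤ x → x ≤ k → (ev τ (w (cycInv k x))).loc ∈ Set.Icc 1 m := by
    intro x h1 h2
    have h := cycInv_mem hk1 h1 h2
    exact hjrange _ h.1 h.2
  have hjinj' : ∀ x, 1 ≤ x → x ≤ k → ∀ y, 1 ≤ y → y ≤ k → x ≠ y →
      (ev τ (w (cycInv k x))).loc ≠ (ev τ (w (cycInv k y))).loc := by
    intro x hx1 hx2 y hy1 hy2 hxy
    have hx' := cycInv_mem hk1 hx1 hx2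
    have hy' := cycInv_mem hk1 hy1 hy2
    have hne : cycInv k x ≠ cycInv k y := by
      intro hc
      have e1 := cyc_cycInv hx1 hx2
      rw [hc] at e1
      have e2 := cyc_cycInv hy1 hy2
      omega
    exact hjinj _ hx'.1 hx'.2 _ hy'.1 hy'.2 hne
  obtain ⟨σl, hσl1, hσl2, hσl3⟩ := exists_perm_fix m k hkm _ hjrange' hjinj'
  have hσl : ∀ x, 1 ≤ x → x ≤ k → σl ((ev τ (w x)).loc) = cyc k x := by
    intro x h1 h2
    have hc := cyc_mem hk1 h1 h2
    have h := hσl1 (cyc k x) hc.1 hc.2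
    rwa [cycInv_cyc h1 h2] at h
  have hmem : τ.map (trE σp σl) ∈ M.S v := by
    rw [← rename_eq_map]
    exact hL (⇑σl) (bijOn_of_fix σl _ hσl2 hσl3) v _
      (hP (⇑σp) (bijOn_of_fix σp _ hσp2 hσp3) v τ hτ)
  have canonM : ∀ x ∈ Set.Icc 1 k, Mrel (τ.map (trE σp σl)) x (u x) (w x) := by
    intro x hx
    have hx' := Set.mem_Icc.mp hx
    have h := (mrel_tr σp σl τ _ (u x) (w x)).mpr (hM x hx)
    rwa [hσp1 x hx'.1 hx'.2] at h
  have canonO : ∀ x ∈ Set.Icc 1 k,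
      OmegaE Ω (τ.map (trE σp σl)) (cyc k x) (w x) (u (cyc k x)) := by
    intro x hx
    have hx' := Set.mem_Icc.mp hx
    have h := (omega_tr σp σl τ Ω hS _ (w x) (u (cyc k x))).mpr (hO x hx)
    rwa [hσl x hx'.1 hx'.2] at h
  have procEq : ∀ x ∈ Set.Icc 1 k, ∀ i, Mrel (τ.map (trE σp σl)) i (u x) (w x) → i = x := by
    intro x hx i hi
    have h1 : (ev (τ.map (trE σp σl)) (u x)).proc = i := hi.1.2
    have h2 : (ev (τ.map (trE σp σl)) (u x)).proc = x := (canonM x hx).1.2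
    omega
  have locEq : ∀ x ∈ Set.Icc 1 k, ∀ j,
      OmegaE Ω (τ.map (trE σp σl)) j (w x) (u (cyc k x)) → j = cyc k x := by
    intro x hx j hj
    have h1 : (ev (τ.map (trE σp σl)) (w x)).loc = j := hj.1.2
    have h2 : (ev (τ.map (trE σp σl)) (w x)).loc = cyc k x := (canonO x hx).1.2
    omega
  refine ⟨τ.map (trE σp σl), hmem, unamb_tr σp σl τ hU, u, w,
    ⟨⟨hk1, hud, hwd, huw, fun x hx => ⟨x, canonM x hx⟩,
      fun x hx => ⟨cyc k x, canonO x hx⟩, ?_, ?_⟩, canonM, canonO⟩⟩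
  · intro x hx y hy hxy i h1 h2
    have e1 := procEq x hx i h1
    have e2 := procEq y hy i h2
    omega
  · intro x hx y hy hxy j h1 h2
    have e1 := locEq x hx j h1
    have e2 := locEq y hy j h2
    have hx' := Set.mem_Icc.mp hx
    have hy' := Set.mem_Icc.mp hy
    exact hxy (cyc_inj hx'.1 hx'.2 hy'.1 hy'.2 (by omega))
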